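/- The function Wiso : GL⁺(2) → ℝ defined by Wiso(F) = |√(λ₁/λ₂) − √(λ₂/λ₁)|, where λ₁, λ₂ are the singular values of F, is objective, isotropic and isochoric, but Wiso is NOT rank-one convex on GL⁺(2). -/
import Mathlib


open Matrix

/-- The largest singular value of a real 2×2 matrix `F`, i.e. the square root of
the largest eigenvalue of `FᵀF`. -/
noncomputable def lambdaMax (F : Matrix (Fin 2) (Fin 2) ℝ) : ℝ :=
  Real.sqrt (((Fᵀ * F).trace + Real.sqrt ((Fᵀ * F).trace ^ 2 - 4 * (Fᵀ * F).det)) / 2)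

/-- The smallest singular value of a real 2×2 matrix `F`, i.e. the square root of
the smallest eigenvalue of `FᵀF`. -/
noncomputable def lambdaMin (F : Matrix (Fin 2) (Fin 2) ℝ) : ℝ :=
  Real.sqrt (((Fᵀ * F).trace - Real.sqrt ((Fᵀ * F).trace ^ 2 - 4 * (Fᵀ * F).det)) / 2)

/-- Rank-one convexity on `GL⁺(2)`: convexity along rank-one line segments that
stay inside `GL⁺(2)`. -/
def RankOneConvexGLp (W : Matrix (Fin 2) (Fin 2) ℝ → ℝ) : Prop :=
  ∀ F : Matrix (Fin 2) (Fin 2) ℝ, 0 < F.det →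
    ∀ ξ η : Fin 2 → ℝ,
      (∀ t ∈ Set.Icc (0:ℝ) 1, 0 < (F + t • vecMulVec ξ η).det) →
      ∀ θ ∈ Set.Icc (0:ℝ) 1,
        W (θ • F + (1 - θ) • (F + vecMulVec ξ η)) ≤
          θ * W F + (1 - θ) * W (F + vecMulVec ξ η)

/-- The counterexample energy `Wiso(F) = |√(λ₁/λ₂) − √(λ₂/λ₁)|`, written in
terms of the singular values `λ₁ = λmax(F)`, `λ₂ = λmin(F)` of `F` (the
expression is symmetric in the two singular values). -/
noncomputable def Wiso (F : Matrix (Fin 2) (Fin 2) ℝ) : ℝ :=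
  |Real.sqrt (lambdaMax F / lambdaMin F) - Real.sqrt (lambdaMin F / lambdaMax F)|

lemma gram_objective (F Q₁ Q₂ : Matrix (Fin 2) (Fin 2) ℝ) (h1 : Q₁ᵀ * Q₁ = 1)
    (h2 : Q₂ᵀ * Q₂ = 1) :
    ((Q₁ * F * Q₂)ᵀ * (Q₁ * F * Q₂)).trace = (Fᵀ * F).trace ∧
    ((Q₁ * F * Q₂)ᵀ * (Q₁ * F * Q₂)).det = (Fᵀ * F).det := by
  have hG : (Q₁ * F * Q₂)ᵀ * (Q₁ * F * Q₂) = Q₂ᵀ * (Fᵀ * F) * Q₂ := by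
    simp only [Matrix.transpose_mul, Matrix.mul_assoc]
    rw [← Matrix.mul_assoc Q₁ᵀ Q₁, h1, Matrix.one_mul]
  have h2' : Q₂ * Q₂ᵀ = 1 := mul_eq_one_comm.mp h2
  constructor
  · rw [hG, Matrix.trace_mul_cycle, ← Matrix.mul_assoc, h2', Matrix.one_mul]
  · rw [hG, Matrix.det_mul, Matrix.det_mul]
    have : Q₂ᵀ.det * Q₂.det = 1 := by rw [← Matrix.det_mul, h2, Matrix.det_one]
    linear_combination (Fᵀ * F).det * this

lemma lambdaMax_smul (a : ℝ) (ha : 0 < a) (F : Matrix (Fin 2) (Fin 2) ℝ) :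
    lambdaMax (a • F) = a * lambdaMax F := by
  have hG : ((a • F)ᵀ * (a • F)) = (a ^ 2) • (Fᵀ * F) := by
    rw [Matrix.transpose_smul, Matrix.smul_mul, Matrix.mul_smul, smul_smul]
    ring_nf
  unfold lambdaMax
  rw [hG, Matrix.trace_smul, Matrix.det_smul]
  simp only [smul_eq_mul, Fintype.card_fin]
  set T := (Fᵀ * F).trace
  set D := (Fᵀ * F).det
  have h1 : (a ^ 2 * T) ^ 2 - 4 * ((a ^ 2) ^ 2 * D) = (a ^ 2) ^ 2 * (T ^ 2 - 4 * D) := by ring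
  rw [h1, Real.sqrt_mul (by positivity), Real.sqrt_sq (by positivity)]
  have h2 : (a ^ 2 * T + a ^ 2 * Real.sqrt (T ^ 2 - 4 * D)) / 2
      = a ^ 2 * ((T + Real.sqrt (T ^ 2 - 4 * D)) / 2) := by ring
  rw [h2, Real.sqrt_mul (by positivity), Real.sqrt_sq ha.le]

lemma lambdaMin_smul (a : ℝ) (ha : 0 < a) (F : Matrix (Fin 2) (Fin 2) ℝ) :
    lambdaMin (a • F) = a * lambdaMin F := by
  have hG : ((a • F)ᵀ * (a • F)) = (a ^ 2) • (Fᵀ * F) := by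
    rw [Matrix.transpose_smul, Matrix.smul_mul, Matrix.mul_smul, smul_smul]
    ring_nf
  unfold lambdaMin
  rw [hG, Matrix.trace_smul, Matrix.det_smul]
  simp only [smul_eq_mul, Fintype.card_fin]
  set T := (Fᵀ * F).trace
  set D := (Fᵀ * F).det
  have h1 : (a ^ 2 * T) ^ 2 - 4 * ((a ^ 2) ^ 2 * D) = (a ^ 2) ^ 2 * (T ^ 2 - 4 * D) := by ring
  rw [h1, Real.sqrt_mul (by positivity), Real.sqrt_sq (by positivity)]
  have h2 : (a ^ 2 * T - a ^ 2 * Real.sqrt (T ^ 2 - 4 * D)) / 2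
      = a ^ 2 * ((T - Real.sqrt (T ^ 2 - 4 * D)) / 2) := by ring
  rw [h2, Real.sqrt_mul (by positivity), Real.sqrt_sq ha.le]

lemma gram_diag (x : ℝ) :
    (!![x, 0; 0, 1] : Matrix (Fin 2) (Fin 2) ℝ)ᵀ * !![x, 0; 0, 1] = !![x ^ 2, 0; 0, 1] := by
  ext i j
  fin_cases i <;> fin_cases j <;>
    simp [Matrix.mul_apply, Fin.sum_univ_two, Matrix.vecHead, Matrix.vecTail] <;> ring

lemma lambdaMax_diag (x : ℝ) (hx : 1 ≤ x) : lambdaMax !![x, 0; 0, 1] = x := by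
  unfold lambdaMax
  rw [gram_diag]
  rw [Matrix.trace_fin_two_of, Matrix.det_fin_two_of]
  have h1 : (x ^ 2 + 1) ^ 2 - 4 * (x ^ 2 * 1 - 0 * 0) = (x ^ 2 - 1) ^ 2 := by ring
  rw [h1, Real.sqrt_sq (by nlinarith)]
  have h2 : (x ^ 2 + 1 + (x ^ 2 - 1)) / 2 = x ^ 2 := by ring
  rw [h2, Real.sqrt_sq (by linarith)]

lemma lambdaMin_diag (x : ℝ) (hx : 1 ≤ x) : lambdaMin !![x, 0; 0, 1] = 1 := by
  unfold lambdaMin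
  rw [gram_diag]
  rw [Matrix.trace_fin_two_of, Matrix.det_fin_two_of]
  have h1 : (x ^ 2 + 1) ^ 2 - 4 * (x ^ 2 * 1 - 0 * 0) = (x ^ 2 - 1) ^ 2 := by ring
  rw [h1, Real.sqrt_sq (by nlinarith)]
  have h2 : (x ^ 2 + 1 - (x ^ 2 - 1)) / 2 = 1 := by ring
  rw [h2, Real.sqrt_one]

lemma Wiso_diag (x : ℝ) (hx : 1 ≤ x) :
    Wiso !![x, 0; 0, 1] = Real.sqrt x - Real.sqrt x⁻¹ := by
  unfold Wiso
  rw [lambdaMax_diag x hx, lambdaMin_diag x hx, div_one, one_div]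
  rw [abs_of_nonneg]
  have hle : Real.sqrt x⁻¹ ≤ Real.sqrt x :=
    Real.sqrt_le_sqrt (by
      rw [inv_le_iff_one_le_mul₀ (by linarith)]
      nlinarith)
  linarith

/-- **counterexample.** `Wiso` is objective, isotropic and
isochoric on `GL⁺(2)`, but not rank-one convex on `GL⁺(2)`. -/
theorem Wiso_objective_isotropic_isochoric_not_rankOneConvex :
    (∀ F : Matrix (Fin 2) (Fin 2) ℝ, 0 < F.det →
      ∀ Q₁ Q₂ : Matrix (Fin 2) (Fin 2) ℝ, Q₁ᵀ * Q₁ = 1 → Q₂ᵀ * Q₂ = 1 →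
        Wiso (Q₁ * F * Q₂) = Wiso F) ∧
    (∀ a : ℝ, 0 < a → ∀ F : Matrix (Fin 2) (Fin 2) ℝ, 0 < F.det →
      Wiso (a • F) = Wiso F) ∧
    ¬ RankOneConvexGLp Wiso := by
  refine ⟨?_, ?_, ?_⟩
  · intro F _ Q₁ Q₂ h1 h2
    obtain ⟨ht, hd⟩ := gram_objective F Q₁ Q₂ h1 h2
    unfold Wiso lambdaMax lambdaMin
    rw [ht, hd]
  · intro a ha F _
    unfold Wiso
    rw [lambdaMax_smul a ha F, lambdaMin_smul a ha F,
      mul_div_mul_left _ _ ha.ne', mul_div_mul_left _ _ ha.ne']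
  · intro h
    have hV : vecMulVec ![(2:ℝ), 0] ![(1:ℝ), 0] = !![(2:ℝ), 0; 0, 0] := by
      ext i j
      fin_cases i <;> fin_cases j <;>
        simp [vecMulVec_apply, Matrix.vecHead, Matrix.vecTail]
    have hdet : (0:ℝ) < (!![(2:ℝ), 0; 0, 1]).det := by
      rw [Matrix.det_fin_two_of]; norm_num
    have hline : ∀ t ∈ Set.Icc (0:ℝ) 1,
        0 < ((!![(2:ℝ), 0; 0, 1]) + t • vecMulVec ![(2:ℝ), 0] ![(1:ℝ), 0]).det := by
      intro t ht
      have he : (!![(2:ℝ), 0; 0, 1]) + t • vecMulVec ![(2:ℝ), 0] ![(1:ℝ), 0]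
          = !![2 + 2 * t, 0; 0, 1] := by
        rw [hV]
        ext i j
        fin_cases i <;> fin_cases j <;>
          simp [Matrix.vecHead, Matrix.vecTail] <;> ring
      rw [he, Matrix.det_fin_two_of]
      nlinarith [ht.1]
    have hmid : (1/2 : ℝ) • (!![(2:ℝ), 0; 0, 1])
        + (1 - 1/2 : ℝ) • ((!![(2:ℝ), 0; 0, 1]) + vecMulVec ![(2:ℝ), 0] ![(1:ℝ), 0])
        = !![(3:ℝ), 0; 0, 1] := by
      rw [hV]
      ext i j
      fin_cases i <;> fin_cases j <;>
        simp [Matrix.vecHead, Matrix.vecTail] <;> norm_num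
    have hsum : (!![(2:ℝ), 0; 0, 1]) + vecMulVec ![(2:ℝ), 0] ![(1:ℝ), 0]
        = !![(4:ℝ), 0; 0, 1] := by
      rw [hV]
      ext i j
      fin_cases i <;> fin_cases j <;>
        simp [Matrix.vecHead, Matrix.vecTail] <;> norm_num
    have key := h (!![(2:ℝ), 0; 0, 1]) hdet ![(2:ℝ), 0] ![(1:ℝ), 0] hline (1/2) (by norm_num)
    rw [hmid, hsum] at key
    rw [Wiso_diag 3 (by norm_num), Wiso_diag 2 (by norm_num),
      Wiso_diag 4 (by norm_num)] at key
    have s2 : Real.sqrt 2 ^ 2 = 2 := Real.sq_sqrt (by norm_num)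
    have s3 : Real.sqrt 3 ^ 2 = 3 := Real.sq_sqrt (by norm_num)
    have s2p : 0 < Real.sqrt 2 := Real.sqrt_pos.mpr (by norm_num)
    have s3p : 0 < Real.sqrt 3 := Real.sqrt_pos.mpr (by norm_num)
    have e2 : Real.sqrt (2:ℝ)⁻¹ = Real.sqrt 2 / 2 := by
      rw [Real.sqrt_inv, eq_div_iff (by norm_num : (2:ℝ) ≠ 0), inv_mul_eq_div,
        div_eq_iff s2p.ne']
      nlinarith [s2]
    have e3 : Real.sqrt (3:ℝ)⁻¹ = Real.sqrt 3 / 3 := by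
      rw [Real.sqrt_inv, eq_div_iff (by norm_num : (3:ℝ) ≠ 0), inv_mul_eq_div,
        div_eq_iff s3p.ne']
      nlinarith [s3]
    have e4 : Real.sqrt (4:ℝ) = 2 := by
      rw [show (4:ℝ) = 2 ^ 2 by norm_num, Real.sqrt_sq (by norm_num)]
    have e4' : Real.sqrt (4:ℝ)⁻¹ = 1/2 := by
      rw [show ((4:ℝ)⁻¹) = (1/2 : ℝ) ^ 2 by norm_num, Real.sqrt_sq (by norm_num)]
    rw [e2, e3, e4, e4'] at key
    -- key : √3 - √3/3 ≤ 1/2 * (√2 - √2/2) + (1 - 1/2) * (2 - 1/2)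
    -- i.e. 2√3/3 ≤ √2/4 + 3/4, contradiction since 8√3 > 3√2 + 9
    nlinarith [sq_nonneg (Real.sqrt 3 - 1.73), sq_nonneg (Real.sqrt 2 - 1.42), s2, s3]
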